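/- The first-column transfer-matrix identity: for the matrices D₁, E₁ of the Matrix Ansatz solution, the entry (⟨W₁| M₁ M₂ ⋯ M_n |V₁⟩) with each Mᵢ ∈ {D₁, E₁} is a polynomial in α, β, q with nonnegative integer coefficients, for every n ≥ 1 and every choice of the Mᵢ. -/

import Mathlib

open MvPolynomial

/-- Truncation to indices `0, …, n` of the matrix `D₁` of the Matrix Ansatz
solution, with entries in `ℤ[α, β, q]` (variables `X 0 = α`, `X 1 = β`,
`X 2 = q`): `d_{i,i+1} = α` and `0` elsewhere.  (Since `D₁` raises the index by
one and `E₁` is lower triangular, only indices `≤ n` contribute to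
`⟨W₁|M₁⋯Mₙ|V₁⟩`, so this truncation computes the same quantity.) -/
noncomputable def D1trunc (n : ℕ) :
    Matrix (Fin (n + 1)) (Fin (n + 1)) (MvPolynomial (Fin 3) ℤ) :=
  fun i j => if (j : ℕ) = (i : ℕ) + 1 then X 0 else 0

/-- Truncation to indices `0, …, n` of the matrix `E₁` (0-based indexing):
`e_{ij} = β^{i−j+1}(q^j C(i,j) + α ∑_{r<j} C(i−j+r,r) q^r)` for `j ≤ i`,
and `0` above the diagonal. -/
noncomputable def E1trunc (n : ℕ) :
    Matrix (Fin (n + 1)) (Fin (n + 1)) (MvPolynomial (Fin 3) ℤ) :=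
  fun i j => if (j : ℕ) ≤ (i : ℕ) then
    (X 1) ^ ((i : ℕ) - (j : ℕ) + 1) *
      ((X 2) ^ (j : ℕ) * (Nat.choose i j : MvPolynomial (Fin 3) ℤ) +
       X 0 * ∑ r ∈ Finset.range j,
         (Nat.choose ((i : ℕ) - (j : ℕ) + r) r : MvPolynomial (Fin 3) ℤ) * (X 2) ^ r)
  else 0

/-- The row vector `⟨W₁| = (1, 0, …, 0)`. -/
noncomputable def W1trunc (n : ℕ) : Fin (n + 1) → MvPolynomial (Fin 3) ℤ :=
  fun i => if i = 0 then 1 else 0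

/-- The column vector `|V₁⟩ = (1, …, 1)ᵗ`. -/
noncomputable def V1trunc (n : ℕ) : Fin (n + 1) → MvPolynomial (Fin 3) ℤ :=
  fun _ => 1


def PosCoeff (p : MvPolynomial (Fin 3) ℤ) : Prop :=
  ∀ m : Fin 3 →₀ ℕ, 0 ≤ MvPolynomial.coeff m p

lemma posCoeff_zero : PosCoeff 0 := fun m => by simp
lemma posCoeff_one : PosCoeff 1 := by
  intro m; rw [MvPolynomial.coeff_one]; split <;> norm_num
lemma posCoeff_X (i : Fin 3) : PosCoeff (X i) := by
  intro m; rw [MvPolynomial.coeff_X']; split <;> norm_num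
lemma posCoeff_natCast (k : ℕ) : PosCoeff (k : MvPolynomial (Fin 3) ℤ) := by
  intro m
  rw [show ((k : MvPolynomial (Fin 3) ℤ)) = MvPolynomial.C (k : ℤ) by simp,
    MvPolynomial.coeff_C]
  split <;> norm_num
lemma posCoeff_add {p q} (hp : PosCoeff p) (hq : PosCoeff q) : PosCoeff (p + q) := by
  intro m; rw [MvPolynomial.coeff_add]; exact add_nonneg (hp m) (hq m)
lemma posCoeff_mul {p q} (hp : PosCoeff p) (hq : PosCoeff q) : PosCoeff (p * q) := by
  intro m
  rw [MvPolynomial.coeff_mul]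
  exact Finset.sum_nonneg fun x _ => mul_nonneg (hp _) (hq _)
lemma posCoeff_pow {p} (hp : PosCoeff p) (k : ℕ) : PosCoeff (p ^ k) := by
  induction k with
  | zero => simpa using posCoeff_one
  | succ k ih => rw [pow_succ]; exact posCoeff_mul ih hp
lemma posCoeff_sum {s : Finset ℕ} {f : ℕ → MvPolynomial (Fin 3) ℤ}
    (hf : ∀ r ∈ s, PosCoeff (f r)) : PosCoeff (∑ r ∈ s, f r) := by
  intro m
  rw [MvPolynomial.coeff_sum]
  exact Finset.sum_nonneg fun r hr => hf r hr m

def PosMat {n : ℕ} (A : Matrix (Fin (n+1)) (Fin (n+1)) (MvPolynomial (Fin 3) ℤ)) : Prop :=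
  ∀ i j, PosCoeff (A i j)

lemma posMat_mul {n : ℕ} {A B : Matrix (Fin (n+1)) (Fin (n+1)) (MvPolynomial (Fin 3) ℤ)}
    (hA : PosMat A) (hB : PosMat B) : PosMat (A * B) := by
  intro i j m
  rw [Matrix.mul_apply, MvPolynomial.coeff_sum]
  exact Finset.sum_nonneg fun k _ => posCoeff_mul (hA i k) (hB k j) m

lemma posMat_one {n : ℕ} : PosMat (1 : Matrix (Fin (n+1)) (Fin (n+1)) (MvPolynomial (Fin 3) ℤ)) := by
  intro i j
  rw [Matrix.one_apply]
  split
  · exact posCoeff_one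
  · exact posCoeff_zero

lemma posMat_D1 (n : ℕ) : PosMat (D1trunc n) := by
  intro i j
  unfold D1trunc
  split
  · exact posCoeff_X 0
  · exact posCoeff_zero

lemma posMat_E1 (n : ℕ) : PosMat (E1trunc n) := by
  intro i j
  unfold E1trunc
  split
  · exact posCoeff_mul (posCoeff_pow (posCoeff_X 1) _)
      (posCoeff_add
        (posCoeff_mul (posCoeff_pow (posCoeff_X 2) _) (posCoeff_natCast _))
        (posCoeff_mul (posCoeff_X 0)
          (posCoeff_sum fun r _ =>
            posCoeff_mul (posCoeff_natCast _) (posCoeff_pow (posCoeff_X 2) _))))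
  · exact posCoeff_zero

lemma posMat_listProd {n : ℕ} (L : List (Matrix (Fin (n+1)) (Fin (n+1)) (MvPolynomial (Fin 3) ℤ)))
    (hL : ∀ A ∈ L, PosMat A) : PosMat L.prod := by
  induction L with
  | nil => simpa using posMat_one
  | cons A L ih =>
    rw [List.prod_cons]
    exact posMat_mul (hL A List.mem_cons_self) (ih fun B hB => hL B (List.mem_cons_of_mem _ hB))

/-- For every `n ≥ 1` and every word `M₁⋯Mₙ` in the matrices `D₁, E₁` of the
Matrix Ansatz solution, the quantity `⟨W₁|M₁⋯Mₙ|V₁⟩` is a polynomial in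
`ℤ[α, β, q]` all of whose coefficients are nonnegative. -/
theorem transfer_matrix_positive (n : ℕ) (hn : 1 ≤ n) (M : Fin n → Bool) :
    ∀ m : Fin 3 →₀ ℕ,
      0 ≤ MvPolynomial.coeff m
        (dotProduct
          (Matrix.vecMul (W1trunc n)
            ((List.ofFn (fun k : Fin n =>
              if M k then D1trunc n else E1trunc n)).prod))
          (V1trunc n)) := by
  intro m
  have hP : PosMat ((List.ofFn (fun k : Fin n =>
      if M k then D1trunc n else E1trunc n)).prod) := by
    apply posMat_listProd
    intro A hA
    rw [List.mem_ofFn] at hA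
    obtain ⟨k, rfl⟩ := hA
    by_cases h : M k <;> simp only [h, if_true, if_false]
    · exact posMat_D1 n
    · exact posMat_E1 n
  rw [dotProduct]
  rw [MvPolynomial.coeff_sum]
  apply Finset.sum_nonneg
  intro j _
  have : PosCoeff (Matrix.vecMul (W1trunc n) ((List.ofFn (fun k : Fin n =>
      if M k then D1trunc n else E1trunc n)).prod) j) := by
    rw [Matrix.vecMul]
    intro m'
    rw [dotProduct, MvPolynomial.coeff_sum]
    apply Finset.sum_nonneg
    intro i _
    refine posCoeff_mul (p := W1trunc n i) ?_ (hP i j) m'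
    unfold W1trunc
    split
    · exact posCoeff_one
    · exact posCoeff_zero
  refine posCoeff_mul this ?_ m
  unfold V1trunc
  exact posCoeff_one
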